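/- Let d : ℕ → A be admissible and not eventually periodic. Then for every n ≥ 1, Φ_n(d) ≤ |E(n)| ≤ (n + 1) · Φ_n(d). -/

import Mathlib

namespace BetaShift

variable {A : Type*}

/-- The shift map: `(shift x) n = x (n+1)`. -/
def shift (x : ℕ → A) : ℕ → A := fun n => x (n + 1)

/-- Lexicographic order on one-sided sequences: `x = y`, or there is an index `i`
such that `x j = y j` for all `j < i` and `x i < y i`. -/
def SeqLe [LinearOrder A] (x y : ℕ → A) : Prop :=
  x = y ∨ ∃ i, (∀ j, j < i → x j = y j) ∧ x i < y i

/-- A word `w` occurs in the sequence `x`. -/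
def Occurs (w : List A) (x : ℕ → A) : Prop :=
  ∃ i : ℕ, ∀ j : Fin w.length, x (i + j) = w.get j

/-- `Complexity x n` is the number `Φ_n(x)` of distinct words of length `n` occurring in `x`. -/
noncomputable def Complexity (x : ℕ → A) (n : ℕ) : ℕ :=
  Set.ncard {w : List A | w.length = n ∧ Occurs w x}

/-- A sequence is eventually periodic if there are `p ≥ 1` and `N` with
`d (i + p) = d i` for all `i ≥ N`. -/
def EventuallyPeriodic (d : ℕ → A) : Prop :=
  ∃ p, 1 ≤ p ∧ ∃ N, ∀ i, N ≤ i → d (i + p) = d i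

/-- `(d)_k`, the `k`-letter prefix of the sequence `d`, as a word. -/
def prefixWord (d : ℕ → A) (k : ℕ) : List A := List.ofFn (fun i : Fin k => d i)

variable {m : ℕ}

/-- `d` is admissible: every shift of `d` is lexicographically ≤ `d`,
and `d` is not eventually `0`. -/
def Admissible (d : ℕ → Fin m) : Prop :=
  (∀ i, SeqLe (shift^[i] d) d) ∧ ∀ N, ∃ i, N ≤ i ∧ (d i).val ≠ 0

/-- The one-sided β-shift `X_d` determined by the admissible sequence `d`. -/
def XSet (d : ℕ → Fin m) : Set (ℕ → Fin m) :=
  {x | ∀ i, SeqLe (shift^[i] x) d}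

/-- The language of `X_d`: all words occurring in some point of `X_d`. -/
def Lang (d : ℕ → Fin m) : Set (List (Fin m)) :=
  {w | ∃ x ∈ XSet d, Occurs w x}

/-- The follower set of the word `w` in `X_d`. -/
def Fol (d : ℕ → Fin m) (w : List (Fin m)) : Set (List (Fin m)) :=
  {u | w ++ u ∈ Lang d}

/-- The predecessor set of the word `w` in `X_d`. -/
def Pred (d : ℕ → Fin m) (w : List (Fin m)) : Set (List (Fin m)) :=
  {s | s ++ w ∈ Lang d}

/-- The extender set of the word `w` in `X_d`. -/
def Ext (d : ℕ → Fin m) (w : List (Fin m)) : Set (List (Fin m) × List (Fin m)) :=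
  {p | p.1 ++ w ++ p.2 ∈ Lang d}

/-- `|F(n)|`: the number of distinct follower sets of words of length `n` in `X_d`. -/
noncomputable def FolCount (d : ℕ → Fin m) (n : ℕ) : ℕ :=
  Set.ncard {S | ∃ w ∈ Lang d, w.length = n ∧ S = Fol d w}

/-- `|P(n)|`: the number of distinct predecessor sets of words of length `n` in `X_d`. -/
noncomputable def PredCount (d : ℕ → Fin m) (n : ℕ) : ℕ :=
  Set.ncard {S | ∃ w ∈ Lang d, w.length = n ∧ S = Pred d w}

/-- `|E(n)|`: the number of distinct extender sets of words of length `n` in `X_d`. -/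
noncomputable def ExtCount (d : ℕ → Fin m) (n : ℕ) : ℕ :=
  Set.ncard {S | ∃ w ∈ Lang d, w.length = n ∧ S = Ext d w}

/-- The largest `k ≤ n` such that the `k`-letter prefix of `d` is a suffix of `v`
(`k = 0`, the empty prefix, always works). -/
def classIndex (d : ℕ → Fin m) (n : ℕ) (v : List (Fin m)) : ℕ :=
  Nat.findGreatest (fun k => prefixWord d k <:+ v) n

/-- Lexicographic comparison of (equal-length) words: `u = v`, or at the first
index where they differ, `u` takes the smaller value. -/
def WordLe [LinearOrder A] (u v : List A) : Prop :=
  u = v ∨ ∃ i, ∃ (hu : i < u.length) (hv : i < v.length),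
    (∀ j (hju : j < u.length) (hjv : j < v.length), j < i → u.get ⟨j, hju⟩ = v.get ⟨j, hjv⟩) ∧
    u.get ⟨i, hu⟩ < v.get ⟨i, hv⟩

end BetaShift

open BetaShift

namespace BetaShift

variable {m : ℕ}

/-- The segment `d k, d (k+1), ..., d (k+n-1)` of a sequence, as a word. -/
def seg (d : ℕ → Fin m) (k n : ℕ) : List (Fin m) := List.ofFn (fun i : Fin n => d (k + i))

@[simp] lemma length_seg (d : ℕ → Fin m) (k n : ℕ) : (seg d k n).length = n := by
  simp [seg]

@[simp] lemma seg_zero (d : ℕ → Fin m) (k : ℕ) : seg d k 0 = [] := rfl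

lemma seg_succ (d : ℕ → Fin m) (k n : ℕ) : seg d k (n + 1) = d k :: seg d (k + 1) n := by
  have hf : (fun i : Fin n => d (k + (↑(i.succ)))) = fun i : Fin n => d (k + 1 + ↑i) := by
    funext i
    congr 1
    simp only [Fin.val_succ]
    omega
  simp only [seg, List.ofFn_succ, Fin.val_zero, Nat.add_zero, hf]

lemma get_seg (d : ℕ → Fin m) (k n j : ℕ) (h : j < (seg d k n).length) :
    (seg d k n).get ⟨j, h⟩ = d (k + j) := by
  simp [seg]

lemma seg_eq_iff {x y : ℕ → Fin m} {k l n : ℕ} :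
    seg x k n = seg y l n ↔ ∀ j, j < n → x (k + j) = y (l + j) := by
  induction n generalizing k l with
  | zero => simp
  | succ n ih =>
    rw [seg_succ, seg_succ]
    constructor
    · intro h j hj
      have h1 : x k = y l := (List.cons.injEq _ _ _ _ ▸ h).1
      have h2 := ih.mp (List.cons.injEq _ _ _ _ ▸ h).2
      match j with
      | 0 => simpa using h1
      | j + 1 =>
        have := h2 j (by omega)
        have e1 : k + (j + 1) = k + 1 + j := by omega
        have e2 : l + (j + 1) = l + 1 + j := by omega
        rw [e1, e2]; exact this
    · intro h
      have h1 : x k = y l := by simpa using h 0 (by omega)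
      rw [h1]
      congr 1
      apply ih.mpr
      intro j hj
      have e1 : k + 1 + j = k + (j + 1) := by omega
      have e2 : l + 1 + j = l + (j + 1) := by omega
      rw [e1, e2]; exact h (j + 1) (by omega)

lemma seg_add (d : ℕ → Fin m) (k a b : ℕ) :
    seg d k (a + b) = seg d k a ++ seg d (k + a) b := by
  induction a generalizing k with
  | zero => simp
  | succ a ih =>
    have e : a + 1 + b = (a + b) + 1 := by omega
    rw [e, seg_succ, seg_succ, ih (k + 1)]
    have e2 : k + 1 + a = k + (a + 1) := by omega
    rw [e2]
    simp

lemma drop_seg (d : ℕ → Fin m) (k n t : ℕ) :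
    List.drop t (seg d k n) = seg d (k + t) (n - t) := by
  apply List.ext_getElem (by simp)
  intro i h1 h2
  rw [List.getElem_drop]
  simp only [seg, List.getElem_ofFn]
  congr 1
  omega

section lexfacts

variable {α : Type*} [LinearOrder α]

lemma not_nil_lt (l : List α) : ¬ (l < []) := by
  intro h
  have h' : List.Lex (· < ·) l [] := h
  cases h'

lemma cons_lt_cons_iff {a b : α} {s t : List α} :
    (a :: s) < (b :: t) ↔ a < b ∨ (a = b ∧ s < t) := by
  constructor
  · intro h
    have h' : List.Lex (· < ·) (a :: s) (b :: t) := h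
    cases h' with
    | cons h => exact Or.inr ⟨rfl, h⟩
    | rel h => exact Or.inl h
  · rintro (h | ⟨rfl, h⟩)
    · exact List.Lex.rel h
    · exact List.Lex.cons h

lemma lt_append_iff {a a' b b' : List α} (h : a.length = a'.length) :
    a ++ b < a' ++ b' ↔ a < a' ∨ (a = a' ∧ b < b') := by
  induction a generalizing a' with
  | nil =>
    match a' with
    | [] => simp [not_nil_lt]
    | x :: t => simp at h
  | cons x s ih =>
    match a' with
    | [] => simp at h
    | y :: t =>
      simp only [List.length_cons, Nat.add_right_cancel_iff] at h
      simp only [List.cons_append, cons_lt_cons_iff, ih h, List.cons.injEq]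
      tauto

lemma le_append_iff {a a' b b' : List α} (h : a.length = a'.length) :
    a ++ b ≤ a' ++ b' ↔ a < a' ∨ (a = a' ∧ b ≤ b') := by
  rw [le_iff_lt_or_eq, le_iff_lt_or_eq, lt_append_iff h]
  constructor
  · rintro ((h1 | ⟨rfl, h2⟩) | h3)
    · exact Or.inl h1
    · exact Or.inr ⟨rfl, Or.inl h2⟩
    · obtain ⟨rfl, rfl⟩ := List.append_inj h3 h
      exact Or.inr ⟨rfl, Or.inr rfl⟩
  · rintro (h1 | ⟨rfl, (h2 | rfl)⟩)
    · exact Or.inl (Or.inl h1)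
    · exact Or.inl (Or.inr ⟨rfl, h2⟩)
    · exact Or.inr rfl

end lexfacts

lemma seg_lt_iff {x y : ℕ → Fin m} {k l n : ℕ} :
    seg x k n < seg y l n ↔
      ∃ i, i < n ∧ (∀ j, j < i → x (k + j) = y (l + j)) ∧ x (k + i) < y (l + i) := by
  induction n generalizing k l with
  | zero =>
    simp only [seg_zero]
    constructor
    · intro h; exact absurd h (not_nil_lt _)
    · rintro ⟨i, hi, -⟩; omega
  | succ n ih =>
    rw [seg_succ, seg_succ, cons_lt_cons_iff]
    constructor
    · rintro (h | ⟨heq, hlt⟩)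
      · exact ⟨0, by omega, by omega, by simpa using h⟩
      · obtain ⟨i, hi, hag, hst⟩ := ih.mp hlt
        refine ⟨i + 1, by omega, ?_, ?_⟩
        · intro j hj
          match j with
          | 0 => simpa using heq
          | j + 1 =>
            have := hag j (by omega)
            have e1 : k + (j + 1) = k + 1 + j := by omega
            have e2 : l + (j + 1) = l + 1 + j := by omega
            rw [e1, e2]; exact this
        · have e1 : k + (i + 1) = k + 1 + i := by omega
          have e2 : l + (i + 1) = l + 1 + i := by omega
          rw [e1, e2]; exact hst
    · rintro ⟨i, hi, hag, hst⟩
      match i with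
      | 0 => exact Or.inl (by simpa using hst)
      | i + 1 =>
        refine Or.inr ⟨by simpa using hag 0 (by omega), ih.mpr ⟨i, by omega, ?_, ?_⟩⟩
        · intro j hj
          have := hag (j + 1) (by omega)
          have e1 : k + (j + 1) = k + 1 + j := by omega
          have e2 : l + (j + 1) = l + 1 + j := by omega
          rw [e1, e2] at this; exact this
        · have e1 : k + (i + 1) = k + 1 + i := by omega
          have e2 : l + (i + 1) = l + 1 + i := by omega
          rw [e1, e2] at hst; exact hst

lemma shift_iterate (x : ℕ → Fin m) (q t : ℕ) : (shift^[q] x) t = x (q + t) := by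
  induction q generalizing t with
  | zero => simp
  | succ q ih =>
    rw [Function.iterate_succ_apply']
    show (shift^[q] x) (t + 1) = x (q + 1 + t)
    rw [ih]
    congr 1
    omega

lemma SeqLe.seg_le {x y : ℕ → Fin m} (h : SeqLe x y) (n : ℕ) : seg x 0 n ≤ seg y 0 n := by
  rcases h with rfl | ⟨i, hag, hlt⟩
  · exact le_refl _
  · rcases lt_or_ge i n with hin | hin
    · exact le_of_lt (seg_lt_iff.mpr ⟨i, hin, fun j hj => by simpa using hag j hj,
        by simpa using hlt⟩)
    · exact le_of_eq (seg_eq_iff.mpr (fun j hj => by simpa using hag j (by omega)))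

lemma mem_XSet_seg_le {d x : ℕ → Fin m} (hx : x ∈ XSet d) (q n : ℕ) :
    seg x q n ≤ seg d 0 n := by
  have h := (hx q).seg_le n
  have he : seg (shift^[q] x) 0 n = seg x q n :=
    seg_eq_iff.mpr (fun j hj => by simp [shift_iterate])
  rwa [he] at h

lemma dominance {d : ℕ → Fin m} (hd : Admissible d) {a r : ℕ}
    (hag : ∀ q, q < r → d (a + q) = d q) (ℓ : ℕ) : seg d (a + r) ℓ ≤ seg d r ℓ := by
  rcases hd.1 a with heq | ⟨p, hpag, hplt⟩
  · have hpt : ∀ t, d (a + t) = d t := fun t => by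
      have := congrFun heq t; rwa [shift_iterate] at this
    exact le_of_eq (seg_eq_iff.mpr (fun j hj => by
      rw [show a + r + j = a + (r + j) by omega, hpt (r + j)]))
  · rw [shift_iterate] at hplt
    have hpag' : ∀ q, q < p → d (a + q) = d q := fun q hq => by
      have := hpag q hq; rwa [shift_iterate] at this
    have hrp : r ≤ p := by
      by_contra hc
      push_neg at hc
      exact absurd (hag p hc) (ne_of_lt hplt)
    rcases lt_or_ge (p - r) ℓ with hl | hl
    · refine le_of_lt (seg_lt_iff.mpr ⟨p - r, hl, ?_, ?_⟩)
      · intro j hj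
        have := hpag' (r + j) (by omega)
        rw [show a + r + j = a + (r + j) by omega, this]
      · rw [show a + r + (p - r) = a + p by omega, show r + (p - r) = p by omega]
        exact hplt
    · exact le_of_eq (seg_eq_iff.mpr (fun j hj => by
        rw [show a + r + j = a + (r + j) by omega, hpag' (r + j) (by omega)]))

lemma occurs_iff_seg {w : List (Fin m)} {x : ℕ → Fin m} :
    Occurs w x ↔ ∃ i, w = seg x i w.length := by
  constructor
  · rintro ⟨i, h⟩
    refine ⟨i, List.ext_getElem (by simp) (fun j h1 h2 => ?_)⟩
    have := h ⟨j, h1⟩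
    simp only [seg, List.getElem_ofFn]
    simpa using this.symm
  · rintro ⟨i, h⟩
    refine ⟨i, fun j => ?_⟩
    have hb : (j : ℕ) < w.length := j.2
    rw [List.get_eq_getElem, List.getElem_of_eq h hb]
    simp [seg]

lemma lang_suffix_le {d : ℕ → Fin m} {w : List (Fin m)}
    (hw : w ∈ Lang d) (i : ℕ) : List.drop i w ≤ seg d 0 (w.length - i) := by
  obtain ⟨x, hx, hocc⟩ := hw
  obtain ⟨i0, h⟩ := occurs_iff_seg.mp hocc
  rw [h]
  simp only [length_seg]
  rw [drop_seg]
  exact mem_XSet_seg_le hx _ _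

lemma seqle_zero_tail {d : ℕ → Fin m} (hm : 1 ≤ m) (hd : Admissible d) (y : ℕ → Fin m) (r : ℕ)
    (hagree : ∀ q, q < r → y q = d q) (hzero : ∀ q, r ≤ q → y q = ⟨0, hm⟩) : SeqLe y d := by
  classical
  set z : Fin m := ⟨0, hm⟩ with hzdef
  have hex : ∃ t, r ≤ t ∧ d t ≠ z := by
    obtain ⟨t, ht, hv⟩ := hd.2 r
    exact ⟨t, ht, fun he => hv (by rw [he])⟩
  set p := Nat.find hex with hpdef
  obtain ⟨hrp, hdp⟩ := Nat.find_spec hex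
  have hmin : ∀ q, q < p → r ≤ q → d q = z := by
    intro q hq hrq
    have := Nat.find_min hex hq
    push_neg at this
    exact this hrq
  refine Or.inr ⟨p, ?_, ?_⟩
  · intro q hq
    rcases lt_or_ge q r with h1 | h1
    · exact hagree q h1
    · rw [hzero q h1, hmin q hq h1]
  · have hyp : y p = z := hzero p hrp
    rw [hyp]
    refine lt_of_le_of_ne ?_ (Ne.symm hdp)
    exact Fin.mk_le_of_le_val (by omega)

lemma lang_of_suffix_le {d : ℕ → Fin m} (hm : 1 ≤ m) (hd : Admissible d) {w : List (Fin m)}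
    (h : ∀ i, List.drop i w ≤ seg d 0 (w.length - i)) : w ∈ Lang d := by
  classical
  set x : ℕ → Fin m := fun t => if ht : t < w.length then w.get ⟨t, ht⟩ else ⟨0, hm⟩ with hxdef
  have hxw : ∀ t (ht : t < w.length), x t = w.get ⟨t, ht⟩ := fun t ht => by
    simp [hxdef, dif_pos ht]
  have hxz : ∀ t, w.length ≤ t → x t = ⟨0, hm⟩ := fun t ht => by
    simp [hxdef, dif_neg (by omega : ¬ t < w.length)]
  have hdropx : ∀ i, i < w.length → List.drop i w = seg x i (w.length - i) := by
    intro i hi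
    apply List.ext_getElem (by simp)
    intro q h1 h2
    rw [List.getElem_drop]
    simp only [seg, List.getElem_ofFn]
    have hq : i + q < w.length := by simp at h1; omega
    rw [hxw (i + q) hq]
    simp
  refine ⟨x, ?_, ?_⟩
  · intro i
    rcases le_or_gt w.length i with hi | hi
    · apply seqle_zero_tail hm hd _ 0
      · intro q hq; omega
      · intro q _
        rw [shift_iterate]
        exact hxz _ (by omega)
    · rcases lt_or_eq_of_le (h i) with hlt | heq
      · rw [hdropx i hi] at hlt
        obtain ⟨q0, hq0, hag, hst⟩ := seg_lt_iff.mp hlt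
        refine Or.inr ⟨q0, ?_, ?_⟩
        · intro q hq
          rw [shift_iterate]
          simpa using hag q hq
        · rw [shift_iterate]
          simpa using hst
      · apply seqle_zero_tail hm hd _ (w.length - i)
        · intro q hq
          rw [shift_iterate]
          have h1 : i + q < w.length := by omega
          have hq1 : q < (List.drop i w).length := by simp; omega
          have h2 := List.getElem_of_eq heq hq1
          rw [List.getElem_drop] at h2
          simp only [seg, List.getElem_ofFn] at h2
          rw [hxw (i + q) h1]
          simpa [List.get_eq_getElem] using h2
        · intro q hq
          rw [shift_iterate]
          exact hxz _ (by omega)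
  · refine occurs_iff_seg.mpr ⟨0, ?_⟩
    apply List.ext_getElem (by simp)
    intro q h1 h2
    simp only [seg, List.getElem_ofFn, Nat.zero_add]
    rw [hxw q (by simpa using h1)]
    simp

lemma mem_lang_iff {d : ℕ → Fin m} (hm : 1 ≤ m) (hd : Admissible d) {w : List (Fin m)} :
    w ∈ Lang d ↔ ∀ i, List.drop i w ≤ seg d 0 (w.length - i) :=
  ⟨fun hw i => lang_suffix_le hw i, lang_of_suffix_le hm hd⟩

lemma seg_mem_lang {d : ℕ → Fin m} (hd : Admissible d) (k n : ℕ) : seg d k n ∈ Lang d := by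
  refine ⟨d, hd.1, occurs_iff_seg.mpr ⟨k, ?_⟩⟩
  simp

lemma drop_append_ge {α : Type*} (a b : List α) {i : ℕ} (h : a.length ≤ i) :
    List.drop i (a ++ b) = List.drop (i - a.length) b := by
  rw [List.drop_append, List.drop_eq_nil_of_le h, List.nil_append]

lemma drop_middle {α : Type*} (s w u : List α) {i : ℕ} (h1 : s.length ≤ i)
    (h2 : i ≤ s.length + w.length) :
    List.drop i (s ++ w ++ u) = List.drop (i - s.length) w ++ u := by
  rw [List.append_assoc, drop_append_ge s _ h1, List.drop_append_of_le_length (by omega)]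

lemma drop_low {α : Type*} (s w u : List α) {i : ℕ} (h : i ≤ s.length) :
    List.drop i (s ++ w ++ u) = List.drop i s ++ (w ++ u) := by
  rw [List.append_assoc, List.drop_append_of_le_length h]

/-- The largest `k ≤ |w|` such that the length-`k` prefix of `d` is a suffix of `w`. -/
def Jw (d : ℕ → Fin m) (w : List (Fin m)) : ℕ :=
  Nat.findGreatest (fun k => List.drop (w.length - k) w = seg d 0 k) w.length

lemma Jw_le (d : ℕ → Fin m) (w : List (Fin m)) : Jw d w ≤ w.length :=
  Nat.findGreatest_le _

lemma Jw_spec (d : ℕ → Fin m) (w : List (Fin m)) :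
    List.drop (w.length - Jw d w) w = seg d 0 (Jw d w) :=
  Nat.findGreatest_spec (P := fun k => List.drop (w.length - k) w = seg d 0 k) (m := 0)
    (Nat.zero_le _) (by simp only [Nat.sub_zero, List.drop_length, seg_zero])

lemma le_Jw {d : ℕ → Fin m} {w : List (Fin m)} {k : ℕ} (hk : k ≤ w.length)
    (h : List.drop (w.length - k) w = seg d 0 k) : k ≤ Jw d w :=
  Nat.le_findGreatest hk h

lemma seg_J_le {d : ℕ → Fin m} (hd : Admissible d) {w' : List (Fin m)} {k : ℕ}
    (hk : List.drop (w'.length - k) w' = seg d 0 k) (hkn : k ≤ w'.length) (ℓ : ℕ) :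
    seg d (Jw d w') ℓ ≤ seg d k ℓ := by
  have hkj : k ≤ Jw d w' := le_Jw hkn hk
  have hjlen : Jw d w' ≤ w'.length := Jw_le d w'
  have hjs := Jw_spec d w'
  have hdd : List.drop (w'.length - k) w' =
      List.drop (Jw d w' - k) (List.drop (w'.length - Jw d w') w') := by
    rw [List.drop_drop]
    congr 1
    omega
  rw [hjs, drop_seg, Nat.zero_add] at hdd
  have hdd2 : seg d (Jw d w' - k) k = seg d 0 k := by
    have e2 : Jw d w' - (Jw d w' - k) = k := by omega
    rw [e2] at hdd
    rw [← hdd, hk]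
  have hag : ∀ q, q < k → d ((Jw d w' - k) + q) = d q := fun q hq => by
    simpa using seg_eq_iff.mp hdd2 q hq
  have := dominance hd hag ℓ
  rwa [show (Jw d w' - k) + k = Jw d w' by omega] at this

lemma transfer {d : ℕ → Fin m} (hm : 1 ≤ m) (hd : Admissible d) {n : ℕ} {w w' : List (Fin m)}
    (hw'L : w' ∈ Lang d) (hlen : w.length = n) (hlen' : w'.length = n)
    (hfac : ∀ k, w ≠ seg d k n) (hfac' : ∀ k, w' ≠ seg d k n)
    (hord : ∀ k, w ≤ seg d k n ↔ w' ≤ seg d k n)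
    (hJ : Jw d w = Jw d w') (s u : List (Fin m))
    (hy : s ++ w ++ u ∈ Lang d) : s ++ w' ++ u ∈ Lang d := by
  have hC := fun i => lang_suffix_le hy i
  have hylen : (s ++ w ++ u).length = s.length + n + u.length := by
    simp only [List.length_append, hlen]
  have hy'len : (s ++ w' ++ u).length = s.length + n + u.length := by
    simp only [List.length_append, hlen']
  apply lang_of_suffix_le hm hd
  intro i
  rw [hy'len]
  rcases le_or_gt (s.length + n) i with hcase | hcase
  · -- the dropped word lies entirely inside u
    have e' : List.drop i (s ++ w' ++ u) = List.drop (i - (s.length + n)) u := by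
      rw [drop_append_ge (s ++ w') u (by simp only [List.length_append, hlen']; omega)]
      congr 1
      simp [hlen']
    have e : List.drop i (s ++ w ++ u) = List.drop (i - (s.length + n)) u := by
      rw [drop_append_ge (s ++ w) u (by simp only [List.length_append, hlen]; omega)]
      congr 1
      simp [hlen]
    have hCi := hC i
    rw [hylen, e] at hCi
    rw [e']
    exact hCi
  rcases le_or_gt s.length i with hcase2 | hcase2
  · -- the dropped word starts inside w'
    set k := s.length + n - i with hkdef
    have hk1 : 1 ≤ k := by omega
    have hkn : k ≤ n := by omega
    have e' : List.drop i (s ++ w' ++ u) = List.drop (i - s.length) w' ++ u :=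
      drop_middle s w' u hcase2 (by omega)
    rw [e']
    have hsplitlen : (List.drop (i - s.length) w').length = k := by
      simp only [List.length_drop, hlen']; omega
    rw [show s.length + n + u.length - i = k + u.length by omega, seg_add, Nat.zero_add]
    rw [le_append_iff (by simp [hsplitlen])]
    have hw'le : List.drop (i - s.length) w' ≤ seg d 0 k := by
      have h5 := lang_suffix_le hw'L (i - s.length)
      rwa [hlen', show n - (i - s.length) = k by omega] at h5
    rcases lt_or_eq_of_le hw'le with hlt | heqq
    · exact Or.inl hlt
    · refine Or.inr ⟨heqq, ?_⟩
      have hkJ : k ≤ Jw d w' :=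
        le_Jw (by omega) (by rw [hlen', show n - k = i - s.length by omega]; exact heqq)
      set j := Jw d w with hjdef
      have hjn : j ≤ n := hlen ▸ Jw_le d w
      have hjspec := Jw_spec d w
      rw [hlen] at hjspec
      have e0 : List.drop (s.length + (n - j)) (s ++ w ++ u) = List.drop (n - j) w ++ u := by
        rw [drop_middle s w u (by omega) (by omega)]
        congr 2
        omega
      have hC0 := hC (s.length + (n - j))
      rw [hylen, e0,
          show s.length + n + u.length - (s.length + (n - j)) = j + u.length by omega,
          seg_add, Nat.zero_add, hjspec] at hC0
      rw [le_append_iff (by simp [hjdef])] at hC0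
      have hule : u ≤ seg d j u.length := by
        rcases hC0 with h1 | h2
        · exact absurd h1 (lt_irrefl _)
        · exact h2.2
      have hdom : seg d (Jw d w') u.length ≤ seg d k u.length :=
        seg_J_le hd (by rw [hlen', show n - k = i - s.length by omega]; exact heqq)
          (by omega) u.length
      rw [← hJ] at hdom
      exact le_trans hule hdom
  · -- the dropped word starts inside s
    set t := s.length - i with htdef
    have ht1 : 1 ≤ t := by omega
    have e' := drop_low s w' u (le_of_lt hcase2)
    have e := drop_low s w u (le_of_lt hcase2)
    rw [e']
    have hdslen : (List.drop i s).length = t := by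
      simp only [List.length_drop, htdef]
    rw [show s.length + n + u.length - i = t + (n + u.length) by omega, seg_add, Nat.zero_add]
    rw [le_append_iff (by simp [hdslen])]
    have hC0 := hC i
    rw [hylen, e, show s.length + n + u.length - i = t + (n + u.length) by omega,
        seg_add, Nat.zero_add, le_append_iff (by simp [hdslen])] at hC0
    rcases hC0 with h1 | ⟨heqq, h2⟩
    · exact Or.inl h1
    · refine Or.inr ⟨heqq, ?_⟩
      rw [seg_add] at h2 ⊢
      rw [le_append_iff (by simp [hlen])] at h2
      rw [le_append_iff (by simp [hlen'])]
      rcases h2 with h3 | ⟨h4, -⟩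
      · have hw'lt : w' < seg d t n := by
          have h5 := (hord t).mp (le_of_lt h3)
          exact lt_of_le_of_ne h5 (hfac' t)
        exact Or.inl hw'lt
      · exact absurd h4 (hfac t)

lemma ext_eq_nonfactor {d : ℕ → Fin m} (hm : 1 ≤ m) (hd : Admissible d) {n : ℕ}
    {w w' : List (Fin m)}
    (hwL : w ∈ Lang d) (hw'L : w' ∈ Lang d) (hlen : w.length = n) (hlen' : w'.length = n)
    (hfac : ∀ k, w ≠ seg d k n) (hfac' : ∀ k, w' ≠ seg d k n)
    (hord : ∀ k, w ≤ seg d k n ↔ w' ≤ seg d k n)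
    (hJ : Jw d w = Jw d w') : Ext d w = Ext d w' := by
  ext p
  constructor
  · intro hp
    exact transfer hm hd hw'L hlen hlen' hfac hfac' hord hJ p.1 p.2 hp
  · intro hp
    exact transfer hm hd hwL hlen' hlen hfac' hfac (fun k => (hord k).symm) hJ.symm p.1 p.2 hp

lemma finite_len (n : ℕ) : {w : List (Fin m) | w.length = n}.Finite := by
  apply Set.Finite.subset (Set.finite_range (List.ofFn : (Fin n → Fin m) → List (Fin m)))
  intro w hw
  refine ⟨fun i => w.get ⟨i, by rw [hw]; exact i.2⟩, ?_⟩
  apply List.ext_getElem (by simpa using hw.symm)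
  intro q h1 h2
  simp

lemma ncard_image_le_of_const {α β γ : Type*} (s : Set α) (hs : s.Finite) (f : α → β)
    (g : α → γ) (h : ∀ a ∈ s, ∀ b ∈ s, g a = g b → f a = f b) :
    (f '' s).ncard ≤ (g '' s).ncard := by
  classical
  rcases s.eq_empty_or_nonempty with rfl | ⟨a0, ha0⟩
  · simp
  set F : γ → β := fun c => if hc : ∃ a ∈ s, g a = c then f hc.choose else f a0 with hF
  have himg : f '' s = F '' (g '' s) := by
    ext b
    constructor
    · rintro ⟨a, ha, rfl⟩
      refine ⟨g a, ⟨a, ha, rfl⟩, ?_⟩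
      have hc : ∃ x ∈ s, g x = g a := ⟨a, ha, rfl⟩
      rw [hF]
      simp only [dif_pos hc]
      exact h _ hc.choose_spec.1 _ ha hc.choose_spec.2
    · rintro ⟨c, ⟨a, ha, rfl⟩, rfl⟩
      have hc : ∃ x ∈ s, g x = g a := ⟨a, ha, rfl⟩
      rw [hF]
      simp only [dif_pos hc]
      exact ⟨_, hc.choose_spec.1, rfl⟩
  rw [himg]
  exact Set.ncard_image_le (hs.image g)

lemma ext_ne_of_lt {d : ℕ → Fin m} (hd : Admissible d) {n : ℕ} {v v' : List (Fin m)}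
    (hvlen : v.length = n) (hvocc : Occurs v d) (hv'len : v'.length = n)
    (hlt : v < v') : Ext d v ≠ Ext d v' := by
  obtain ⟨k, hk⟩ := occurs_iff_seg.mp hvocc
  rw [hvlen] at hk
  intro hee
  have hmem : (seg d 0 k, ([] : List (Fin m))) ∈ Ext d v := by
    show seg d 0 k ++ v ++ [] ∈ Lang d
    rw [List.append_nil]
    have he : seg d 0 k ++ v = seg d 0 (k + n) := by
      rw [seg_add d 0 k n, Nat.zero_add, ← hk]
    rw [he]
    exact seg_mem_lang hd 0 (k + n)
  rw [hee] at hmem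
  have hmem' : seg d 0 k ++ v' ∈ Lang d := by
    have h0 : seg d 0 k ++ v' ++ [] ∈ Lang d := hmem
    rwa [List.append_nil] at h0
  have hcond := lang_suffix_le hmem' 0
  rw [List.drop_zero, Nat.sub_zero] at hcond
  have hlen2 : (seg d 0 k ++ v').length = k + n := by simp [hv'len]
  rw [hlen2, seg_add d 0 k n, Nat.zero_add] at hcond
  rw [le_append_iff (by simp)] at hcond
  rcases hcond with h1 | ⟨-, h2⟩
  · exact absurd h1 (lt_irrefl _)
  · rw [← hk] at h2
    exact absurd hlt (not_lt_of_ge h2)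

end BetaShift



/-- for non-sofic β-shifts, `Φ_n(d) ≤ |E(n)| ≤ (n+1)·Φ_n(d)`. -/
theorem stmt17 (m : ℕ) (hm : 1 ≤ m) (d : ℕ → Fin m) (hd : Admissible d)
    (hnp : ¬ EventuallyPeriodic d) (n : ℕ) (hn : 1 ≤ n) :
    Complexity d n ≤ ExtCount d n ∧ ExtCount d n ≤ (n + 1) * Complexity d n := by
  classical
  set Fac : Set (List (Fin m)) := {w : List (Fin m) | w.length = n ∧ Occurs w d} with hFacDef
  set LW : Set (List (Fin m)) := {w : List (Fin m) | w ∈ Lang d ∧ w.length = n} with hLWDef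
  have hlenFin : {w : List (Fin m) | w.length = n}.Finite := finite_len n
  have hFacFin : Fac.Finite := hlenFin.subset (fun w hw => hw.1)
  have hLWFin : LW.Finite := hlenFin.subset (fun w hw => hw.2)
  have hFacLW : Fac ⊆ LW := by
    rintro w ⟨hlen, hocc⟩
    exact ⟨⟨d, hd.1, hocc⟩, hlen⟩
  have hsegFac : ∀ k, seg d k n ∈ Fac := fun k =>
    ⟨length_seg d k n, occurs_iff_seg.mpr ⟨k, by simp⟩⟩
  have hwle0 : ∀ w ∈ LW, w ≤ seg d 0 n := by
    intro w hw
    have h0 := lang_suffix_le hw.1 0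
    rwa [List.drop_zero, Nat.sub_zero, hw.2] at h0
  have hEset : {S | ∃ w ∈ Lang d, w.length = n ∧ S = Ext d w} = Ext d '' LW := by
    ext S
    constructor
    · rintro ⟨w, hw1, hw2, rfl⟩
      exact ⟨w, ⟨hw1, hw2⟩, rfl⟩
    · rintro ⟨w, ⟨hw1, hw2⟩, rfl⟩
      exact ⟨w, hw1, hw2, rfl⟩
  have hEfin : (Ext d '' LW).Finite := hLWFin.image _
  have hExtCount : ExtCount d n = (Ext d '' LW).ncard := by rw [ExtCount, hEset]
  have hComp : Complexity d n = Fac.ncard := rfl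
  have hinj : Set.InjOn (Ext d) Fac := by
    intro v hv v' hv' hee
    by_contra hne
    rcases lt_or_gt_of_ne hne with hlt | hgt
    · exact ext_ne_of_lt hd hv.1 hv.2 hv'.1 hlt hee
    · exact ext_ne_of_lt hd hv'.1 hv'.2 hv.1 hgt hee.symm
  set NF : Set (List (Fin m)) := LW \ Fac with hNFdef
  set FacF : Finset (List (Fin m)) := hFacFin.toFinset with hFacF
  have hvm_ex : ∀ w ∈ LW, ∃ v, v ∈ Fac ∧ w ≤ v ∧ ∀ f ∈ Fac, w ≤ f → v ≤ f := by
    intro w hw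
    have hne : (FacF.filter (fun v => w ≤ v)).Nonempty :=
      ⟨seg d 0 n, Finset.mem_filter.mpr ⟨hFacFin.mem_toFinset.mpr (hsegFac 0), hwle0 w hw⟩⟩
    refine ⟨(FacF.filter (fun v => w ≤ v)).min' hne, ?_, ?_, ?_⟩
    · have hmem := Finset.min'_mem _ hne
      rw [Finset.mem_filter] at hmem
      exact hFacFin.mem_toFinset.mp hmem.1
    · have hmem := Finset.min'_mem _ hne
      rw [Finset.mem_filter] at hmem
      exact hmem.2
    · intro f hf hwf
      exact Finset.min'_le _ _ (Finset.mem_filter.mpr ⟨hFacFin.mem_toFinset.mpr hf, hwf⟩)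
  choose! vm hvm1 hvm2 hvm3 using hvm_ex
  have hJlt : ∀ w ∈ LW, w ∉ Fac → Jw d w < n := by
    intro w hw hnf
    have hle : Jw d w ≤ n := hw.2 ▸ Jw_le d w
    rcases lt_or_eq_of_le hle with h | h
    · exact h
    · exfalso
      have hspec := Jw_spec d w
      rw [h, hw.2, Nat.sub_self, List.drop_zero] at hspec
      exact hnf (by rw [hspec]; exact hsegFac 0)
  have hnonfac : ∀ w ∈ NF, ∀ k, w ≠ seg d k n := by
    intro w hw k hk
    exact hw.2 (by rw [hk]; exact hsegFac k)
  have hconst : ∀ w ∈ NF, ∀ w' ∈ NF,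
      (Jw d w, vm w) = (Jw d w', vm w') → Ext d w = Ext d w' := by
    intro w hw w' hw' heq
    have h1 : Jw d w = Jw d w' := congrArg Prod.fst heq
    have h2 : vm w = vm w' := congrArg Prod.snd heq
    refine ext_eq_nonfactor hm hd hw.1.1 hw'.1.1 hw.1.2 hw'.1.2
      (hnonfac w hw) (hnonfac w' hw') ?_ h1
    intro k
    constructor
    · intro hle
      have h3 := hvm3 w hw.1 (seg d k n) (hsegFac k) hle
      calc w' ≤ vm w' := hvm2 w' hw'.1
        _ = vm w := h2.symm
        _ ≤ seg d k n := h3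
    · intro hle
      have h3 := hvm3 w' hw'.1 (seg d k n) (hsegFac k) hle
      calc w ≤ vm w := hvm2 w hw.1
        _ = vm w' := h2
        _ ≤ seg d k n := h3
  have hNFfin : NF.Finite := hLWFin.subset Set.diff_subset
  have himg : (Ext d '' NF).ncard ≤ ((fun w => (Jw d w, vm w)) '' NF).ncard :=
    ncard_image_le_of_const NF hNFfin _ _ hconst
  have hsub2 : (fun w => (Jw d w, vm w)) '' NF ⊆ ↑(Finset.range n ×ˢ FacF) := by
    rintro p ⟨w, hw, rfl⟩
    rw [Finset.coe_product]
    refine ⟨?_, ?_⟩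
    · simp only [Finset.coe_range, Set.mem_Iio]
      exact hJlt w hw.1 hw.2
    · simp only [Finset.mem_coe]
      exact hFacFin.mem_toFinset.mpr (hvm1 w hw.1)
  have hcard2 : ((fun w => (Jw d w, vm w)) '' NF).ncard ≤ n * Fac.ncard := by
    have h1 := Set.ncard_le_ncard hsub2 (Finset.finite_toSet _)
    rw [Set.ncard_coe_finset, Finset.card_product, Finset.card_range] at h1
    rwa [Set.ncard_eq_toFinset_card Fac hFacFin]
  constructor
  · rw [hComp, hExtCount]
    exact Set.ncard_le_ncard_of_injOn (Ext d) (fun w hw => ⟨w, hFacLW hw, rfl⟩) hinj hEfin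
  · rw [hComp, hExtCount]
    have hsplit : Ext d '' LW = Ext d '' Fac ∪ Ext d '' NF := by
      rw [← Set.image_union, Set.union_diff_cancel hFacLW]
    calc (Ext d '' LW).ncard ≤ (Ext d '' Fac).ncard + (Ext d '' NF).ncard := by
          rw [hsplit]; exact Set.ncard_union_le _ _
      _ ≤ Fac.ncard + n * Fac.ncard :=
          Nat.add_le_add (Set.ncard_image_le hFacFin) (le_trans himg hcard2)
      _ = (n + 1) * Fac.ncard := by ring
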